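/- For every (η_1,…,η_{m−1}) ∈ V′ (with η_m := 1 − η_1 − ⋯ − η_{m−1}) there is a unique Δ(η) ∈ (θ, ∞) satisfying ∑_{i=1}^m η_i · log(∑_{j=1}^∞ γ_{ij}^{Δ(η)}) = 0, and the function Δ : V′ → ℝ is real analytic on V′. -/

import Mathlib

open Real Filter

open Topology


lemma aux_summable_mono {γ : ℕ → ℝ} (hpos : ∀ j, 0 < γ j) (hle : ∀ j, γ j ≤ 1)
    {s t : ℝ} (hs : Summable fun j => γ j ^ s) (hst : s ≤ t) :
    Summable fun j => γ j ^ t := by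
  refine Summable.of_nonneg_of_le (fun j => (Real.rpow_pos_of_pos (hpos j) t).le)
    (fun j => ?_) hs
  calc γ j ^ t = γ j ^ s * γ j ^ (t - s) := by
        rw [← Real.rpow_add (hpos j)]; ring_nf
  _ ≤ γ j ^ s * 1 := by
        gcongr
        · exact (Real.rpow_pos_of_pos (hpos j) s).le
        · exact Real.rpow_le_one (hpos j).le (hle j) (by linarith)
  _ = γ j ^ s := mul_one _

lemma aux_analyticAt_tsum_rpow {γ : ℕ → ℝ} (hpos : ∀ j, 0 < γ j) (hle : ∀ j, γ j ≤ 1)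
    {a t₀ : ℝ} (hs : Summable fun j => γ j ^ a) (hat : a < t₀) :
    AnalyticAt ℝ (fun t => ∑' j, γ j ^ t) t₀ := by
  set F : ℕ → ℂ → ℂ := fun j z => Complex.exp ((Real.log (γ j) : ℂ) * z) with hF
  have hU : IsOpen {z : ℂ | a < z.re} := isOpen_lt continuous_const Complex.continuous_re
  have hFd : ∀ j, DifferentiableOn ℂ (F j) {z : ℂ | a < z.re} := fun j =>
    (Complex.differentiable_exp.comp ((differentiable_const _).mul differentiable_id)).differentiableOn
  have hbound : ∀ j z, z ∈ {z : ℂ | a < z.re} → ‖F j z‖ ≤ γ j ^ a := by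
    intro j z hz
    rw [hF]
    simp only [Complex.norm_exp]
    have h1 : ((Real.log (γ j) : ℂ) * z).re = Real.log (γ j) * z.re := by simp
    rw [h1, Real.rpow_def_of_pos (hpos j)]
    exact Real.exp_le_exp.2 (mul_le_mul_of_nonpos_left (le_of_lt hz)
      (Real.log_nonpos (hpos j).le (hle j)))
  have hdiff : DifferentiableOn ℂ (fun z => ∑' j, F j z) {z : ℂ | a < z.re} :=
    Complex.differentiableOn_tsum_of_summable_norm hs hFd hU hbound
  have hA : AnalyticOnNhd ℂ (fun z => ∑' j, F j z) {z : ℂ | a < z.re} := hdiff.analyticOnNhd hU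
  have h1 : AnalyticAt ℂ (fun z => ∑' j, F j z) ((t₀ : ℝ) : ℂ) := hA _ (by simpa using hat)
  have h2 : AnalyticAt ℝ (fun t : ℝ => Complex.reCLM ((fun z => ∑' j, F j z)
      (Complex.ofRealCLM t))) t₀ :=
    (Complex.reCLM.analyticAt _).comp ((h1.restrictScalars).comp (Complex.ofRealCLM.analyticAt _))
  refine h2.congr ?_
  filter_upwards [Ioi_mem_nhds hat] with t ht
  have hsumt : Summable fun j => γ j ^ t := aux_summable_mono hpos hle hs (le_of_lt ht)
  have hterm : ∀ j, F j ((t : ℝ) : ℂ) = ((γ j ^ t : ℝ) : ℂ) := by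
    intro j
    rw [hF]
    simp only
    rw [Real.rpow_def_of_pos (hpos j), Complex.ofReal_exp, Complex.ofReal_mul]
  have : (∑' j, F j ((t : ℝ) : ℂ)) = ((∑' j, γ j ^ t : ℝ) : ℂ) := by
    simp_rw [hterm]
    exact (Complex.ofRealCLM.map_tsum hsumt).symm
  simp only [Complex.ofRealCLM_apply, Complex.reCLM_apply]
  rw [this, Complex.ofReal_re]

lemma aux_neg_log_le {x δ : ℝ} (hx : 0 < x) (hx1 : x ≤ 1) (hδ : 0 < δ) :
    -Real.log x ≤ x ^ (-δ) / δ := by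
  have h1 : Real.log (x ^ (-δ)) ≤ x ^ (-δ) - 1 :=
    Real.log_le_sub_one_of_pos (Real.rpow_pos_of_pos hx _)
  rw [Real.log_rpow hx] at h1
  have h2 : (0:ℝ) ≤ x ^ (-δ) := (Real.rpow_pos_of_pos hx _).le
  have h3 : δ * (-Real.log x) ≤ x ^ (-δ) := by nlinarith
  rw [div_eq_inv_mul]
  calc -Real.log x = δ⁻¹ * (δ * (-Real.log x)) := by field_simp
  _ ≤ δ⁻¹ * x ^ (-δ) := by
      apply mul_le_mul_of_nonneg_left h3 (by positivity)

lemma aux_hasDerivAt_tsum_rpow {γ : ℕ → ℝ} (hpos : ∀ j, 0 < γ j) (hle : ∀ j, γ j ≤ 1)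
    {a t₀ : ℝ} (hs : Summable fun j => γ j ^ a) (hat : a < t₀) :
    HasDerivAt (fun t => ∑' j, γ j ^ t) (∑' j, γ j ^ t₀ * Real.log (γ j)) t₀ ∧
      Summable (fun j => γ j ^ t₀ * Real.log (γ j)) := by
  set b : ℝ := (a + t₀) / 2 with hb
  have hab : a < b := by rw [hb]; linarith
  have hbt : b < t₀ := by rw [hb]; linarith
  set u : ℕ → ℝ := fun j => γ j ^ a / (b - a) with hu
  have hus : Summable u := hs.div_const _
  have hbound : ∀ j t, t ∈ Set.Ioi b → ‖γ j ^ t * Real.log (γ j)‖ ≤ u j := by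
    intro j t ht
    have h1 : γ j ^ t ≤ γ j ^ b :=
      Real.rpow_le_rpow_of_exponent_ge (hpos j) (hle j) (le_of_lt ht)
    have h2 : -Real.log (γ j) ≤ γ j ^ (a - b) / (b - a) := by
      have := aux_neg_log_le (hpos j) (hle j) (show (0:ℝ) < b - a by linarith)
      rwa [neg_sub] at this
    have hlog : Real.log (γ j) ≤ 0 := Real.log_nonpos (hpos j).le (hle j)
    rw [norm_mul, Real.norm_eq_abs, Real.norm_eq_abs, abs_of_pos (Real.rpow_pos_of_pos (hpos j) t),
      abs_of_nonpos hlog]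
    calc γ j ^ t * -Real.log (γ j) ≤ γ j ^ b * (γ j ^ (a - b) / (b - a)) := by
          apply mul_le_mul h1 h2 (by linarith [Real.log_nonpos (hpos j).le (hle j)])
            (Real.rpow_pos_of_pos (hpos j) b).le
    _ = u j := by
          rw [hu, mul_div_assoc', ← Real.rpow_add (hpos j)]
          ring_nf
  have hderiv : ∀ j t, t ∈ Set.Ioi b →
      HasDerivAt (fun t => γ j ^ t) (γ j ^ t * Real.log (γ j)) t := fun j t _ =>
    (Real.hasStrictDerivAt_const_rpow (hpos j) t).hasDerivAt
  constructor
  · exact hasDerivAt_tsum_of_isPreconnected hus isOpen_Ioi isPreconnected_Ioi hderiv hbound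
      hbt (aux_summable_mono hpos hle hs (le_of_lt hat)) hbt
  · exact Summable.of_norm_bounded hus (fun j => hbound j t₀ hbt)

lemma aux_analyticAt_log {f : ℝ → ℝ} {x : ℝ} (hf : AnalyticAt ℝ f x) (hx : 0 < f x) :
    AnalyticAt ℝ (fun t => Real.log (f t)) x := by
  have h2 : AnalyticAt ℝ (fun t => Complex.ofRealCLM (f t)) x :=
    (Complex.ofRealCLM.analyticAt (f x)).comp hf
  have hmem : (Complex.ofRealCLM (f x)) ∈ Complex.slitPlane := by
    simpa using Complex.ofReal_mem_slitPlane.2 hx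
  have h3 : AnalyticAt ℝ (fun t => Complex.log (Complex.ofRealCLM (f t))) x :=
    AnalyticAt.comp (g := Complex.log) (f := fun t => Complex.ofRealCLM (f t))
      ((analyticAt_clog hmem).restrictScalars (𝕜 := ℝ)) h2
  have h1 : AnalyticAt ℝ (fun t => Complex.reCLM (Complex.log (Complex.ofRealCLM (f t)))) x :=
    AnalyticAt.comp (g := fun z => Complex.reCLM z)
      (f := fun t => Complex.log (Complex.ofRealCLM (f t)))
      (Complex.reCLM.analyticAt _) h3
  refine h1.congr (Eventually.of_forall fun t => ?_)
  simp [Complex.log_ofReal_re]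

lemma aux_analytic_inverse {E F : Type*} [NormedAddCommGroup E] [NormedSpace ℝ E]
    [CompleteSpace E] [NormedAddCommGroup F] [NormedSpace ℝ F] [CompleteSpace F]
    {f : E → F} {i : E ≃L[ℝ] F} {a : E} (hf : AnalyticAt ℝ f a)
    (hd : HasFDerivAt f (i : E →L[ℝ] F) a) :
    ∃ g : F → E, AnalyticAt ℝ g (f a) ∧ ContinuousAt g (f a) ∧ g (f a) = a ∧
      (∀ᶠ y in 𝓝 (f a), f (g y) = y) := by
  have hstrict : HasStrictFDerivAt f (i : E →L[ℝ] F) a := by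
    have h := hf.hasStrictFDerivAt
    rwa [hd.fderiv] at h
  set φ := hstrict.toOpenPartialHomeomorph f with hφ
  have hsrc : a ∈ φ.source := hstrict.mem_toOpenPartialHomeomorph_source
  have hcoe : (φ : E → F) = f := hstrict.toOpenPartialHomeomorph_coe
  have hφa : φ a = f a := congrFun hcoe a
  obtain ⟨p, hp⟩ := hf
  have hp1 : p 1 = (continuousMultilinearCurryFin1 ℝ E F).symm (i : E →L[ℝ] F) := by
    have h1 := hp.hasFDerivAt
    have h2 := h1.unique hd
    rw [← h2]
    exact ((continuousMultilinearCurryFin1 ℝ E F).symm_apply_apply (p 1)).symm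
  have hφp : HasFPowerSeriesAt (φ : E → F) p a := by rw [hcoe]; exact hp
  have hsymm := φ.hasFPowerSeriesAt_symm hsrc hφp hp1
  rw [hφa] at hsymm
  refine ⟨φ.symm, ⟨_, hsymm⟩, ?_, ?_, ?_⟩
  · have := φ.continuousAt_symm (φ.map_source hsrc)
    rwa [hφa] at this
  · have := φ.left_inv hsrc
    rwa [hφa] at this
  · have htgt : f a ∈ φ.target := by rw [← hφa]; exact φ.map_source hsrc
    filter_upwards [φ.open_target.mem_nhds htgt] with y hy
    have := φ.right_inv hy
    rwa [hcoe] at this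

/-- For every `(η₁,…,η_{m-1}) ∈ V'` (with `η_m := 1 - η₁ - ⋯ - η_{m-1}`)
there is a unique `Δ(η) ∈ (θ, ∞)` with `∑_{i=1}^m ηᵢ · log (∑ⱼ γᵢⱼ^{Δ(η)}) = 0`, and the
function `Δ : V' → ℝ` is real analytic on `V'`. -/
theorem dimension_real_analytic
    (m : ℕ) (hm : 2 ≤ m) (γ : ℕ → ℕ → ℝ)
    (hγpos : ∀ i < m, ∀ j, 0 < γ i j)
    (hγsum : ∀ i < m, Summable (fun j => γ i j))
    (hγsup : ∃ C : ℝ, C < 1 ∧ ∀ i < m, ∀ j, γ i j ≤ C)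
    (θ : ℝ)
    (hθ : θ = ⨆ i : Fin m, sInf {t : ℝ | 0 < t ∧ Summable (fun j => γ i j ^ t)})
    (hdiv : ∃ i₀ < m, ¬ Summable (fun j => γ i₀ j ^ θ))
    (V' : Set (EuclideanSpace ℝ (Fin (m - 1))))
    (hV' : V' = {p | (∀ i, 0 < p i) ∧ ∑ i, p i < 1}) :
    (∀ p ∈ V', ∃! t : ℝ, θ < t ∧
      (∑ i : Fin (m - 1), p i * Real.log (∑' j, γ i j ^ t))
        + (1 - ∑ i, p i) * Real.log (∑' j, γ (m - 1) j ^ t) = 0) ∧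
    ∃ Δ : EuclideanSpace ℝ (Fin (m - 1)) → ℝ,
      (∀ p ∈ V', θ < Δ p ∧
        (∑ i : Fin (m - 1), p i * Real.log (∑' j, γ i j ^ (Δ p)))
          + (1 - ∑ i, p i) * Real.log (∑' j, γ (m - 1) j ^ (Δ p)) = 0) ∧
      AnalyticOnNhd ℝ Δ V' := by
  obtain ⟨C, hC1, hCb⟩ := hγsup
  have h0m : 0 < m := by omega
  have hn : m - 1 < m := by omega
  have hle1 : ∀ i < m, ∀ j, γ i j ≤ 1 := fun i hi j => (hCb i hi j).trans hC1.le
  have hlt1 : ∀ i < m, ∀ j, γ i j < 1 := fun i hi j => lt_of_le_of_lt (hCb i hi j) hC1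
  have hC0 : 0 < C := lt_of_lt_of_le (hγpos 0 h0m 0) (hCb 0 h0m 0)
  have hSne : ∀ i < m, Set.Nonempty {t : ℝ | 0 < t ∧ Summable (fun j => γ i j ^ t)} := by
    intro i hi
    exact ⟨1, one_pos, by simpa [Real.rpow_one] using hγsum i hi⟩
  have hθi : ∀ i, i < m → sInf {t : ℝ | 0 < t ∧ Summable (fun j => γ i j ^ t)} ≤ θ := by
    intro i hi
    rw [hθ]
    exact le_ciSup (f := fun i : Fin m => sInf {t : ℝ | 0 < t ∧ Summable (fun j => γ i j ^ t)})
      (Set.Finite.bddAbove (Set.finite_range _)) (⟨i, hi⟩ : Fin m)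
  have hθ0 : 0 ≤ θ := by
    refine le_trans ?_ (hθi 0 h0m)
    exact le_csInf (hSne 0 h0m) (fun b hb => hb.1.le)
  have hsumm : ∀ i < m, ∀ t : ℝ, θ < t → Summable (fun j => γ i j ^ t) := by
    intro i hi t ht
    obtain ⟨s, hsmem, hst⟩ := exists_lt_of_csInf_lt (hSne i hi) (lt_of_le_of_lt (hθi i hi) ht)
    exact aux_summable_mono (hγpos i hi) (hle1 i hi) hsmem.2 hst.le
  have hSpos : ∀ i < m, ∀ t : ℝ, θ < t → 0 < ∑' j, γ i j ^ t := fun i hi t ht =>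
    Summable.tsum_pos (hsumm i hi t ht) (fun j => (Real.rpow_pos_of_pos (hγpos i hi j) t).le) 0
      (Real.rpow_pos_of_pos (hγpos i hi 0) t)
  set L : ℕ → ℝ → ℝ := fun i t => Real.log (∑' j, γ i j ^ t) with hL
  set P : EuclideanSpace ℝ (Fin (m - 1)) → ℝ → ℝ := fun p t =>
    (∑ i : Fin (m - 1), p i * L i t) + (1 - ∑ i, p i) * L (m - 1) t with hP
  have hLanal : ∀ i < m, ∀ t₀ : ℝ, θ < t₀ → AnalyticAt ℝ (L i) t₀ := by
    intro i hi t₀ ht₀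
    have ha : θ < (θ + t₀) / 2 := by linarith
    have hat : (θ + t₀) / 2 < t₀ := by linarith
    exact aux_analyticAt_log
      (aux_analyticAt_tsum_rpow (hγpos i hi) (hle1 i hi) (hsumm i hi _ ha) hat)
      (hSpos i hi t₀ ht₀)
  have hLmono : ∀ i < m, ∀ s t : ℝ, θ < s → s < t → L i t < L i s := by
    intro i hi s t hs hst
    apply Real.log_lt_log (hSpos i hi t (hs.trans hst))
    refine Summable.tsum_lt_tsum (fun j => Real.rpow_le_rpow_of_exponent_ge (hγpos i hi j)
      (hle1 i hi j) hst.le) (Real.rpow_lt_rpow_of_exponent_gt (hγpos i hi 0)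
      (hlt1 i hi 0) hst) (hsumm i hi t (hs.trans hst)) (hsumm i hi s hs)
  have hmono : ∀ p ∈ V', StrictAntiOn (P p) (Set.Ioi θ) := by
    intro p hp s hs t ht hst
    rw [hV'] at hp
    have h1 : ∀ i : Fin (m - 1), p i * L ↑i t ≤ p i * L ↑i s := fun i =>
      mul_le_mul_of_nonneg_left (hLmono ↑i (by omega) s t hs hst).le (hp.1 i).le
    have h2 : (1 - ∑ i, p i) * L (m - 1) t < (1 - ∑ i, p i) * L (m - 1) s :=
      mul_lt_mul_of_pos_left (hLmono (m - 1) hn s t hs hst) (by linarith [hp.2])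
    exact add_lt_add_of_le_of_lt (Finset.sum_le_sum fun i _ => h1 i) h2
  have hPanal_t : ∀ (p : EuclideanSpace ℝ (Fin (m - 1))) (t₀ : ℝ), θ < t₀ →
      AnalyticAt ℝ (fun t => P p t) t₀ := by
    intro p t₀ ht₀
    refine AnalyticAt.add ?_ ?_
    · exact Finset.analyticAt_fun_sum _ (fun i _ => analyticAt_const.mul (hLanal ↑i (by omega) t₀ ht₀))
    · exact analyticAt_const.mul (hLanal (m - 1) hn t₀ ht₀)
  -- negativity for large t
  have hTneg : ∀ p ∈ V', ∃ T : ℝ, θ + 1 ≤ T ∧ P p T < 0 := by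
    intro p hp
    rw [hV'] at hp
    set M : ℝ := (∑ i ∈ Finset.range m, ∑' j, γ i j) + 1 with hM
    have hM0 : (0:ℝ) ≤ ∑ i ∈ Finset.range m, ∑' j, γ i j :=
      Finset.sum_nonneg fun i hi =>
        tsum_nonneg fun j => (hγpos i (Finset.mem_range.1 hi) j).le
    have hM1 : (1:ℝ) ≤ M := by rw [hM]; linarith
    have hMi : ∀ i < m, ∑' j, γ i j ≤ M := by
      intro i hi
      have h1 : ∑' j, γ i j ≤ ∑ i ∈ Finset.range m, ∑' j, γ i j :=
        Finset.single_le_sum (f := fun i => ∑' j, γ i j)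
          (fun i hi => tsum_nonneg fun j => (hγpos i (Finset.mem_range.1 hi) j).le)
          (Finset.mem_range.2 hi)
      rw [hM]; linarith
    obtain ⟨k, hk⟩ := exists_pow_lt_of_lt_one (show (0:ℝ) < 1 / M by positivity) hC1
    refine ⟨max (θ + 1) (k + 1), le_max_left _ _, ?_⟩
    set T : ℝ := max (θ + 1) (k + 1) with hT
    have hTθ : θ < T := lt_of_lt_of_le (by linarith) (le_max_left _ _)
    have hTk : (k:ℝ) ≤ T - 1 := by
      have := le_max_right (θ + 1) ((k:ℝ) + 1); linarith
    have hSlt : ∀ i < m, ∑' j, γ i j ^ T < 1 := by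
      intro i hi
      have hterm : ∀ j, γ i j ^ T ≤ C ^ (T - 1) * γ i j := by
        intro j
        have h1 : γ i j ^ T = γ i j ^ (T - 1) * γ i j := by
          rw [← Real.rpow_add_one (hγpos i hi j).ne'] ; ring_nf
        rw [h1]
        have h2 : γ i j ^ (T - 1) ≤ C ^ (T - 1) :=
          Real.rpow_le_rpow (hγpos i hi j).le (hCb i hi j) (by linarith [hTθ, hθ0])
        exact mul_le_mul_of_nonneg_right h2 (hγpos i hi j).le
      have h3 : ∑' j, γ i j ^ T ≤ ∑' j, C ^ (T - 1) * γ i j :=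
        Summable.tsum_le_tsum hterm (hsumm i hi T hTθ) ((hγsum i hi).mul_left _)
      rw [tsum_mul_left] at h3
      have h4 : C ^ (T - 1) ≤ C ^ (k:ℝ) :=
        Real.rpow_le_rpow_of_exponent_ge hC0 hC1.le hTk
      have h5 : C ^ ((k:ℝ)) = C ^ k := Real.rpow_natCast C k
      have h6 : C ^ (T - 1) * (∑' j, γ i j) ≤ C ^ k * M := by
        apply mul_le_mul (by rw [← h5]; exact h4) (hMi i hi)
          (tsum_nonneg fun j => (hγpos i hi j).le) (pow_nonneg hC0.le k)
      have h7 : C ^ k * M < (1 / M) * M :=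
        mul_lt_mul_of_pos_right hk (by linarith)
      have h8 : (1 / M) * M = 1 := by field_simp
      calc ∑' j, γ i j ^ T ≤ C ^ (T - 1) * ∑' j, γ i j := h3
      _ ≤ C ^ k * M := h6
      _ < (1 / M) * M := h7
      _ = 1 := h8
    have hLneg : ∀ i < m, L i T < 0 := fun i hi =>
      Real.log_neg (hSpos i hi T hTθ) (hSlt i hi)
    have h9 : ∀ i : Fin (m - 1), p i * L ↑i T ≤ 0 := fun i =>
      mul_nonpos_of_nonneg_of_nonpos (hp.1 i).le (hLneg ↑i (by omega)).le
    refine add_neg_of_nonpos_of_neg (Finset.sum_nonpos fun i _ => h9 i) ?_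
    exact mul_neg_of_pos_of_neg (by linarith [hp.2]) (hLneg (m - 1) hn)
  -- positivity near θ
  have hTpos : ∀ p ∈ V', ∃ t : ℝ, θ < t ∧ t < θ + 1 ∧ 0 < P p t := by
    intro p hp
    rw [hV'] at hp
    obtain ⟨i₀, hi₀, hdiv₀⟩ := hdiv
    set B : ℝ := ∑ i ∈ Finset.range m, ((θ + 1) * Real.log (γ i 0)) with hB
    have hlogneg : ∀ i < m, Real.log (γ i 0) < 0 := fun i hi =>
      Real.log_neg (hγpos i hi 0) (hlt1 i hi 0)
    have hBterm : ∀ i < m, (θ + 1) * Real.log (γ i 0) ≤ 0 := fun i hi =>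
      mul_nonpos_of_nonneg_of_nonpos (by linarith) (hlogneg i hi).le
    have hB0 : B ≤ 0 := Finset.sum_nonpos fun i hi => hBterm i (Finset.mem_range.1 hi)
    have hBle : ∀ i < m, B ≤ (θ + 1) * Real.log (γ i 0) := by
      intro i hi
      have hsplit := Finset.add_sum_erase (Finset.range m)
        (fun i => (θ + 1) * Real.log (γ i 0)) (Finset.mem_range.2 hi)
      have hrest : ∑ i' ∈ (Finset.range m).erase i, (θ + 1) * Real.log (γ i' 0) ≤ 0 :=
        Finset.sum_nonpos fun i' hi' =>
          hBterm i' (Finset.mem_range.1 (Finset.mem_of_mem_erase hi'))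
      beta_reduce at hsplit
      rw [hB, ← hsplit]
      linarith
    have hLB : ∀ i < m, ∀ t : ℝ, θ < t → t ≤ θ + 1 → B ≤ L i t := by
      intro i hi t ht ht1
      have h1 : Real.log (γ i 0 ^ t) ≤ L i t := by
        apply Real.log_le_log (Real.rpow_pos_of_pos (hγpos i hi 0) t)
        exact Summable.le_tsum (hsumm i hi t ht) 0
          (fun j _ => (Real.rpow_pos_of_pos (hγpos i hi j) t).le)
      rw [Real.log_rpow (hγpos i hi 0)] at h1
      have h2 : (θ + 1) * Real.log (γ i 0) ≤ t * Real.log (γ i 0) :=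
        mul_le_mul_of_nonpos_right ht1 (hlogneg i hi).le
      exact le_trans (hBle i hi) (le_trans h2 h1)
    -- coefficient of i₀
    have hps : (0:ℝ) ≤ ∑ i, p i := Finset.sum_nonneg fun i _ => (hp.1 i).le
    obtain ⟨c, hc0, hkey⟩ : ∃ c : ℝ, 0 < c ∧ ∀ t : ℝ, θ < t → t ≤ θ + 1 →
        c * L i₀ t + B ≤ P p t := by
      rcases lt_or_ge i₀ (m - 1) with hcase | hcase
      · refine ⟨p ⟨i₀, hcase⟩, hp.1 _, fun t ht ht1 => ?_⟩
        simp only [hP]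
        have hsplit : ∑ i : Fin (m - 1), p i * L ↑i t
            = p ⟨i₀, hcase⟩ * L i₀ t
              + ∑ i ∈ Finset.univ.erase ⟨i₀, hcase⟩, p i * L ↑i t :=
          (Finset.add_sum_erase _ _ (Finset.mem_univ _)).symm
        have h1 : ∀ i : Fin (m - 1), p i * B ≤ p i * L ↑i t := fun i =>
          mul_le_mul_of_nonneg_left (hLB ↑i (by omega) t ht ht1) (hp.1 i).le
        have h2 : (1 - ∑ i, p i) * B ≤ (1 - ∑ i, p i) * L (m - 1) t :=
          mul_le_mul_of_nonneg_left (hLB (m - 1) hn t ht ht1) (by linarith [hp.2])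
        have h3 : ∑ i ∈ Finset.univ.erase ⟨i₀, hcase⟩, p i * B
            ≤ ∑ i ∈ Finset.univ.erase ⟨i₀, hcase⟩, p i * L ↑i t :=
          Finset.sum_le_sum fun i _ => h1 i
        have h4 : (∑ i ∈ Finset.univ.erase ⟨i₀, hcase⟩, p i) * B
            = ∑ i ∈ Finset.univ.erase ⟨i₀, hcase⟩, p i * B := by
          rw [Finset.sum_mul]
        have h5 : (∑ i ∈ Finset.univ.erase ⟨i₀, hcase⟩, p i) + (1 - ∑ i, p i) ≤ 1 := by
          have : ∑ i ∈ Finset.univ.erase ⟨i₀, hcase⟩, p i ≤ ∑ i, p i :=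
            Finset.sum_le_sum_of_subset_of_nonneg (Finset.subset_univ _)
              (fun i _ _ => (hp.1 i).le)
          linarith
        have h6 : (∑ i ∈ Finset.univ.erase ⟨i₀, hcase⟩, p i) ≥ 0 :=
          Finset.sum_nonneg fun i _ => (hp.1 i).le
        have h8 : (1:ℝ) * B ≤ ((∑ i ∈ Finset.univ.erase ⟨i₀, hcase⟩, p i) + (1 - ∑ i, p i)) * B :=
          mul_le_mul_of_nonpos_right h5 hB0
        rw [hsplit]
        have h4' : (∑ i ∈ Finset.univ.erase ⟨i₀, hcase⟩, p i) * B
            ≤ ∑ i ∈ Finset.univ.erase ⟨i₀, hcase⟩, p i * L ↑i t := by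
          rw [h4]; exact h3
        nlinarith [h2, h4', h8]
      · -- i₀ = m - 1
        have hi₀eq : i₀ = m - 1 := by omega
        subst hi₀eq
        refine ⟨1 - ∑ i, p i, by linarith [hp.2], fun t ht ht1 => ?_⟩
        simp only [hP]
        have h1 : ∀ i : Fin (m - 1), p i * B ≤ p i * L ↑i t := fun i =>
          mul_le_mul_of_nonneg_left (hLB ↑i (by omega) t ht ht1) (hp.1 i).le
        have h3 : ∑ i : Fin (m - 1), p i * B ≤ ∑ i : Fin (m - 1), p i * L ↑i t :=
          Finset.sum_le_sum fun i _ => h1 i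
        have h4 : (∑ i, p i) * B = ∑ i : Fin (m - 1), p i * B := by rw [Finset.sum_mul]
        have h7 : (1:ℝ) * B ≤ (∑ i, p i) * B :=
          mul_le_mul_of_nonpos_right hp.2.le hB0
        have h4' : (∑ i, p i) * B ≤ ∑ i : Fin (m - 1), p i * L ↑i t := by
          rw [h4]; exact h3
        linarith
    -- find t near θ with L i₀ t large
    set R : ℝ := Real.exp ((1 - B) / c) with hR
    have hR0 : 0 < R := Real.exp_pos _
    have htend := (not_summable_iff_tendsto_nat_atTop_of_nonneg
      (fun j => (Real.rpow_pos_of_pos (hγpos i₀ hi₀ j) θ).le)).1 hdiv₀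
    obtain ⟨N, hN⟩ := (htend.eventually_gt_atTop R).exists
    set g : ℝ → ℝ := fun t => ∑ j ∈ Finset.range N, γ i₀ j ^ t with hg
    have hcj : ∀ j, Continuous fun t : ℝ => γ i₀ j ^ t := fun j =>
      (Real.continuous_exp.comp (continuous_const.mul continuous_id)).congr
        fun t => (Real.rpow_def_of_pos (hγpos i₀ hi₀ j) t).symm
    have hgc : ContinuousAt g θ := (continuous_finset_sum _ fun j _ => hcj j).continuousAt
    have hev1 : ∀ᶠ t in nhdsWithin θ (Set.Ioi θ), R < g t :=
      Filter.Eventually.filter_mono nhdsWithin_le_nhds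
        (hgc.preimage_mem_nhds (Ioi_mem_nhds hN))
    have hev2 : Set.Ioo θ (θ + 1) ∈ nhdsWithin θ (Set.Ioi θ) :=
      Ioo_mem_nhdsGT_of_mem (Set.left_mem_Ico.2 (by linarith))
    obtain ⟨t, hgt, htIoo⟩ := (hev1.and (Filter.eventually_of_mem hev2 fun t ht => ht)).exists
    refine ⟨t, htIoo.1, htIoo.2, ?_⟩
    have hsum_t := hsumm i₀ hi₀ t htIoo.1
    have hfg : g t ≤ ∑' j, γ i₀ j ^ t :=
      Summable.sum_le_tsum _ (fun j _ => (Real.rpow_pos_of_pos (hγpos i₀ hi₀ j) t).le) hsum_t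
    have hLR : (1 - B) / c ≤ L i₀ t := by
      have h1 : Real.log R ≤ Real.log (∑' j, γ i₀ j ^ t) :=
        Real.log_le_log hR0 (le_trans hgt.le hfg)
      rwa [hR, Real.log_exp] at h1
    have h2 : 1 - B ≤ c * L i₀ t := by
      rw [div_le_iff₀ hc0] at hLR; linarith [hLR]
    have := hkey t htIoo.1 htIoo.2.le
    linarith
  -- existence and uniqueness of root
  have hexuniq : ∀ p ∈ V', ∃! t : ℝ, θ < t ∧ P p t = 0 := by
    intro p hp
    obtain ⟨T, hT1, hTneg'⟩ := hTneg p hp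
    obtain ⟨t₁, ht₁, ht₁', hPpos⟩ := hTpos p hp
    have ht₁T : t₁ ≤ T := by linarith
    have hcont : ContinuousOn (fun t => P p t) (Set.Icc t₁ T) := fun t ht =>
      ((hPanal_t p t (lt_of_lt_of_le ht₁ ht.1)).continuousAt).continuousWithinAt
    have h0mem : (0:ℝ) ∈ Set.Ioo (P p T) (P p t₁) := ⟨hTneg', hPpos⟩
    obtain ⟨t, htmem, hteq⟩ := intermediate_value_Ioo' ht₁T hcont h0mem
    refine ⟨t, ⟨lt_trans ht₁ htmem.1, hteq⟩, ?_⟩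
    intro t' ht'
    exact (hmono p hp).injOn ht'.1 (lt_trans ht₁ htmem.1) (ht'.2.trans hteq.symm)
  classical
  set Δ : EuclideanSpace ℝ (Fin (m - 1)) → ℝ := fun p =>
    if h : ∃ t : ℝ, θ < t ∧ P p t = 0 then h.choose else 0 with hΔ
  have hΔmem : ∀ p ∈ V', θ < Δ p ∧ P p (Δ p) = 0 := by
    intro p hp
    obtain ⟨t, ht, -⟩ := hexuniq p hp
    have hex : ∃ t : ℝ, θ < t ∧ P p t = 0 := ⟨t, ht⟩
    rw [hΔ]
    simp only [dif_pos hex]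
    exact hex.choose_spec
  have hΔeq : ∀ p ∈ V', ∀ t : ℝ, θ < t → P p t = 0 → Δ p = t := by
    intro p hp t ht hroot
    obtain ⟨t', ht', huni⟩ := hexuniq p hp
    have h1 := huni _ (hΔmem p hp)
    have h2 := huni _ ⟨ht, hroot⟩
    rw [h1, h2]
  have hVopen : IsOpen V' := by
    rw [hV']
    have h1 : {p : EuclideanSpace ℝ (Fin (m - 1)) | (∀ i, 0 < p i) ∧ ∑ i, p i < 1}
        = (⋂ i, {p : EuclideanSpace ℝ (Fin (m - 1)) | 0 < p i}) ∩ {p | ∑ i, p i < 1} := by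
      ext p; simp [Set.mem_iInter]
    rw [h1]
    refine IsOpen.inter (isOpen_iInter_of_finite fun i => ?_) ?_
    · exact isOpen_lt continuous_const (EuclideanSpace.proj i).continuous
    · exact isOpen_lt (continuous_finset_sum _ fun i _ =>
        (EuclideanSpace.proj (𝕜 := ℝ) i).continuous) continuous_const
  refine ⟨fun p hp => hexuniq p hp, Δ, fun p hp => hΔmem p hp, ?_⟩
  intro p₀ hp₀
  obtain ⟨ht₀, hroot₀⟩ := hΔmem p₀ hp₀
  set t₀ : ℝ := Δ p₀ with ht₀def
  have hp₀' : (∀ i, 0 < p₀ i) ∧ ∑ i, p₀ i < 1 := by rwa [hV'] at hp₀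
  -- derivatives of L i at t₀
  have hLd : ∀ i, i < m → ∃ dd : ℝ, dd < 0 ∧ HasDerivAt (L i) dd t₀ := by
    intro i hi
    have ha : θ < (θ + t₀) / 2 := by linarith
    have hat : (θ + t₀) / 2 < t₀ := by linarith
    obtain ⟨hder, hsumd⟩ := aux_hasDerivAt_tsum_rpow (hγpos i hi) (hle1 i hi)
      (hsumm i hi _ ha) hat
    have hfpos := hSpos i hi t₀ ht₀
    refine ⟨(∑' j, γ i j ^ t₀ * Real.log (γ i j)) / (∑' j, γ i j ^ t₀), ?_, ?_⟩
    · refine div_neg_of_neg_of_pos ?_ hfpos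
      have hpos2 : 0 < ∑' j, -(γ i j ^ t₀ * Real.log (γ i j)) :=
        Summable.tsum_pos hsumd.neg (fun j => neg_nonneg.2 (mul_nonpos_of_nonneg_of_nonpos
          (Real.rpow_pos_of_pos (hγpos i hi j) t₀).le
          (Real.log_nonpos (hγpos i hi j).le (hle1 i hi j)))) 0
          (by
            have := mul_neg_of_pos_of_neg (Real.rpow_pos_of_pos (hγpos i hi 0) t₀)
              (Real.log_neg (hγpos i hi 0) (hlt1 i hi 0))
            linarith)
      rw [tsum_neg] at hpos2
      linarith
    · exact hder.log hfpos.ne'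
  choose dL hdLneg hdL using hLd
  set d : ℝ := (∑ i : Fin (m - 1), p₀ i * dL ↑i (i.isLt.trans hn))
    + (1 - ∑ i, p₀ i) * dL (m - 1) hn with hd
  have hd0 : d < 0 := by
    refine add_neg_of_nonpos_of_neg (Finset.sum_nonpos fun i _ =>
      mul_nonpos_of_nonneg_of_nonpos (hp₀'.1 i).le (hdLneg ↑i (i.isLt.trans hn)).le) ?_
    exact mul_neg_of_pos_of_neg (by linarith [hp₀'.2]) (hdLneg (m - 1) hn)
  have hPd : HasDerivAt (fun t => P p₀ t) d t₀ := by
    refine HasDerivAt.add (HasDerivAt.fun_sum fun i _ =>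
      (hdL ↑i (i.isLt.trans hn)).const_mul (p₀ i)) ((hdL (m - 1) hn).const_mul (1 - ∑ i, p₀ i))
  -- the map Q on the product space
  set Q : EuclideanSpace ℝ (Fin (m - 1)) × ℝ → ℝ := fun x => P x.1 x.2 with hQdef
  have hproj : ∀ i : Fin (m - 1), AnalyticAt ℝ
      (fun x : EuclideanSpace ℝ (Fin (m - 1)) × ℝ => x.1 i) (p₀, t₀) := fun i =>
    (((EuclideanSpace.proj (𝕜 := ℝ) i).comp
      (ContinuousLinearMap.fst ℝ (EuclideanSpace ℝ (Fin (m - 1))) ℝ)).analyticAt _).congr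
      (Eventually.of_forall fun x => rfl)
  have hsndA : ∀ i, i < m → AnalyticAt ℝ
      (fun x : EuclideanSpace ℝ (Fin (m - 1)) × ℝ => L i x.2) (p₀, t₀) := by
    intro i hi
    have h1 : AnalyticAt ℝ (fun x : EuclideanSpace ℝ (Fin (m - 1)) × ℝ => x.2) (p₀, t₀) :=
      ((ContinuousLinearMap.snd ℝ (EuclideanSpace ℝ (Fin (m - 1))) ℝ).analyticAt _).congr
        (Eventually.of_forall fun x => rfl)
    have h2 := AnalyticAt.comp (g := L i)
      (f := fun x : EuclideanSpace ℝ (Fin (m - 1)) × ℝ => x.2) (hLanal i hi t₀ ht₀) h1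
    exact h2.congr (Eventually.of_forall fun x => rfl)
  have hQanal : AnalyticAt ℝ Q (p₀, t₀) := by
    have h1 : AnalyticAt ℝ (fun x : EuclideanSpace ℝ (Fin (m - 1)) × ℝ =>
        ∑ i : Fin (m - 1), x.1 i * L ↑i x.2) (p₀, t₀) :=
      Finset.analyticAt_fun_sum _ fun i _ => (hproj i).mul (hsndA ↑i (i.isLt.trans hn))
    have h2 : AnalyticAt ℝ (fun x : EuclideanSpace ℝ (Fin (m - 1)) × ℝ =>
        (1 - ∑ i : Fin (m - 1), x.1 i) * L (m - 1) x.2) (p₀, t₀) :=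
      ((analyticAt_const.sub (Finset.analyticAt_fun_sum _ fun i _ => hproj i)).mul
        (hsndA (m - 1) hn))
    exact (h1.add h2)
  have hQdiffAt : DifferentiableAt ℝ Q (p₀, t₀) := hQanal.differentiableAt
  set A : EuclideanSpace ℝ (Fin (m - 1)) × ℝ →L[ℝ] ℝ := fderiv ℝ Q (p₀, t₀) with hA
  have hQdiff : HasFDerivAt Q A (p₀, t₀) := hQdiffAt.hasFDerivAt
  have hA1 : A ((0 : EuclideanSpace ℝ (Fin (m - 1))), (1:ℝ)) = d := by
    have hc : HasDerivAt (fun t : ℝ =>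
        ((p₀, t) : EuclideanSpace ℝ (Fin (m - 1)) × ℝ)) ((0, 1) :
        EuclideanSpace ℝ (Fin (m - 1)) × ℝ) t₀ :=
      (hasDerivAt_const t₀ p₀).prodMk (hasDerivAt_id t₀)
    have hcomp := hQdiff.comp_hasDerivAt t₀ hc
    exact hcomp.unique hPd
  have hd0' : d ≠ 0 := ne_of_lt hd0
  have hAadd : ∀ (q : EuclideanSpace ℝ (Fin (m - 1))) (s : ℝ),
      A (q, s) = A (q, 0) + s * d := by
    intro q s
    have h1 : ((q, s) : EuclideanSpace ℝ (Fin (m - 1)) × ℝ) = (q, 0) + (0, s) := by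
      simp [Prod.ext_iff]
    rw [h1, map_add]
    congr 1
    have h2 : ((0, s) : EuclideanSpace ℝ (Fin (m - 1)) × ℝ)
        = s • (((0, 1) : EuclideanSpace ℝ (Fin (m - 1)) × ℝ)) := by
      simp [Prod.ext_iff]
    rw [h2, map_smul, hA1, smul_eq_mul]
  set eLin : (EuclideanSpace ℝ (Fin (m - 1)) × ℝ) ≃ₗ[ℝ]
      (EuclideanSpace ℝ (Fin (m - 1)) × ℝ) :=
    LinearEquiv.mk
      ((LinearMap.fst ℝ (EuclideanSpace ℝ (Fin (m - 1))) ℝ).prod (A : _ →ₗ[ℝ] ℝ))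
      (fun y => (y.1, (y.2 - A (y.1, 0)) / d))
      (fun x => by
        refine Prod.ext_iff.2 ⟨rfl, ?_⟩
        show (A (x.1, x.2) - A (x.1, 0)) / d = x.2
        rw [hAadd x.1 x.2]
        field_simp
        ring)
      (fun y => by
        refine Prod.ext_iff.2 ⟨rfl, ?_⟩
        show A (y.1, (y.2 - A (y.1, 0)) / d) = y.2
        rw [hAadd]
        field_simp
        ring) with heLin
  set e' := eLin.toContinuousLinearEquiv with he'
  have hΦHasF : HasFDerivAt (fun x : EuclideanSpace ℝ (Fin (m - 1)) × ℝ => (x.1, Q x))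
      ((e' : (EuclideanSpace ℝ (Fin (m - 1)) × ℝ) →L[ℝ]
        (EuclideanSpace ℝ (Fin (m - 1)) × ℝ))) (p₀, t₀) := by
    have hpair := (hasFDerivAt_fst (𝕜 := ℝ)
      (p := ((p₀, t₀) : EuclideanSpace ℝ (Fin (m - 1)) × ℝ))).prodMk hQdiff
    have hcoe : ((e' : (EuclideanSpace ℝ (Fin (m - 1)) × ℝ) →L[ℝ]
        (EuclideanSpace ℝ (Fin (m - 1)) × ℝ)))
        = (ContinuousLinearMap.fst ℝ (EuclideanSpace ℝ (Fin (m - 1))) ℝ).prod A := by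
      apply ContinuousLinearMap.ext
      intro x
      show e' x = (x.1, A x)
      rw [he']
      rw [LinearEquiv.coe_toContinuousLinearEquiv']
      rfl
    rw [hcoe]
    exact hpair
  have hΦanal : AnalyticAt ℝ (fun x : EuclideanSpace ℝ (Fin (m - 1)) × ℝ => (x.1, Q x))
      (p₀, t₀) := by
    have hfst : AnalyticAt ℝ (fun x : EuclideanSpace ℝ (Fin (m - 1)) × ℝ => x.1) (p₀, t₀) :=
      ((ContinuousLinearMap.fst ℝ (EuclideanSpace ℝ (Fin (m - 1))) ℝ).analyticAt _).congr
        (Eventually.of_forall fun x => rfl)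
    exact hfst.prod hQanal
  obtain ⟨g, hganal, hgcont, hgval, hginv⟩ := aux_analytic_inverse (i := e') hΦanal hΦHasF
  have hQ0 : Q (p₀, t₀) = 0 := hroot₀
  simp only [hQ0] at hganal hgcont hgval hginv
  -- the local analytic function p ↦ (g (p,0)).2
  have hin : AnalyticAt ℝ (fun p : EuclideanSpace ℝ (Fin (m - 1)) =>
      ((p, (0:ℝ)) : EuclideanSpace ℝ (Fin (m - 1)) × ℝ)) p₀ :=
    ((ContinuousLinearMap.inl ℝ (EuclideanSpace ℝ (Fin (m - 1))) ℝ).analyticAt _).congr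
      (Eventually.of_forall fun x => by
        show ContinuousLinearMap.inl ℝ _ ℝ x = (x, (0:ℝ))
        rfl)
  have hcomp1 := AnalyticAt.comp (g := g)
    (f := fun p : EuclideanSpace ℝ (Fin (m - 1)) => ((p, (0:ℝ)) : _ × ℝ)) hganal hin
  have hcomp1' : AnalyticAt ℝ (fun p : EuclideanSpace ℝ (Fin (m - 1)) => g (p, 0)) p₀ :=
    hcomp1.congr (Eventually.of_forall fun x => rfl)
  have hsnd2 : AnalyticAt ℝ (fun y : EuclideanSpace ℝ (Fin (m - 1)) × ℝ => y.2)
      (g (p₀, 0)) :=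
    ((ContinuousLinearMap.snd ℝ (EuclideanSpace ℝ (Fin (m - 1))) ℝ).analyticAt _).congr
      (Eventually.of_forall fun x => rfl)
  have hkanal : AnalyticAt ℝ (fun p : EuclideanSpace ℝ (Fin (m - 1)) => (g (p, 0)).2) p₀ :=
    (AnalyticAt.comp (g := fun y : EuclideanSpace ℝ (Fin (m - 1)) × ℝ => y.2)
      (f := fun p : EuclideanSpace ℝ (Fin (m - 1)) => g (p, 0)) hsnd2 hcomp1').congr
      (Eventually.of_forall fun x => rfl)
  -- eventual equality with Δ
  have hkmap : ContinuousAt (fun p : EuclideanSpace ℝ (Fin (m - 1)) =>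
      ((p, (0:ℝ)) : EuclideanSpace ℝ (Fin (m - 1)) × ℝ)) p₀ :=
    (continuous_id.prodMk continuous_const).continuousAt
  have hev1 : ∀ᶠ p in nhds p₀,
      (fun x : EuclideanSpace ℝ (Fin (m - 1)) × ℝ => (x.1, Q x)) (g (p, 0)) = (p, 0) :=
    hkmap.eventually hginv
  have hgval2 : (g ((p₀, (0:ℝ)) : EuclideanSpace ℝ (Fin (m - 1)) × ℝ)).2 = t₀ := by
    rw [hgval]
  have hgc1 : ContinuousAt (fun p : EuclideanSpace ℝ (Fin (m - 1)) => g (p, 0)) p₀ :=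
    ContinuousAt.comp (g := g)
      (f := fun p : EuclideanSpace ℝ (Fin (m - 1)) => ((p, (0:ℝ)) : _ × ℝ)) hgcont hkmap
  have hc2 : ContinuousAt (fun p : EuclideanSpace ℝ (Fin (m - 1)) => (g (p, 0)).2) p₀ :=
    ContinuousAt.comp (g := fun y : EuclideanSpace ℝ (Fin (m - 1)) × ℝ => y.2)
      (f := fun p : EuclideanSpace ℝ (Fin (m - 1)) => g (p, 0))
      continuous_snd.continuousAt hgc1
  have hev2 : ∀ᶠ p in nhds p₀, θ < (g (p, 0)).2 := by
    have h1 : θ < (g ((p₀, (0:ℝ)) : EuclideanSpace ℝ (Fin (m - 1)) × ℝ)).2 := by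
      rw [hgval2]; exact ht₀
    have h2 := hc2.preimage_mem_nhds (Ioi_mem_nhds h1)
    exact Filter.eventually_of_mem h2 fun p hp => hp
  have hfinal : ∀ᶠ p in nhds p₀, Δ p = (g (p, 0)).2 := by
    filter_upwards [hVopen.mem_nhds hp₀, hev1, hev2] with p hpV hp1 hp2
    have h1 : (g ((p, (0:ℝ)) : EuclideanSpace ℝ (Fin (m - 1)) × ℝ)).1 = p :=
      congrArg Prod.fst hp1
    have h2 : Q (g (p, 0)) = 0 := congrArg Prod.snd hp1
    have h3 : P ((g ((p, (0:ℝ)) : EuclideanSpace ℝ (Fin (m - 1)) × ℝ)).1)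
        ((g (p, 0)).2) = 0 := h2
    rw [h1] at h3
    exact hΔeq p hpV _ hp2 h3
  exact hkanal.congr (Filter.EventuallyEq.symm
    (hfinal : Δ =ᶠ[nhds p₀] fun p => (g (p, 0)).2))
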